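/- Let n ≥ 1, let (p, q) be a Farey chain of length n equipped with a parent assignment (j₁, j₂), let (w_i)_{0 ≤ i ≤ n+1} be an associated family of weight vectors in ℤⁿ and let (s_j)_{0 ≤ j ≤ n+1} be the associated Σ-vectors in ℤⁿ. Then for every 1 ≤ i ≤ n and 0 ≤ j ≤ n+1: ⟨w_i, s_j⟩ = −1 if j = i; ⟨w_i, s_j⟩ = q i if j = 0; ⟨w_i, s_j⟩ = p i if j = n+1; and ⟨w_i, s_j⟩ = 0 in all other cases. -/

import Mathlib

set_option maxHeartbeats 1000000


/-- For a Farey chain with a parent assignment, weight vectors `w_i`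
and Σ-vectors `s_j` (coordinates indexed by `1 ≤ t ≤ n`, with standard dot
product), one has `⟨w_i, s_j⟩ = -1` if `j = i`, `q i` if `j = 0`, `p i` if
`j = n+1`, and `0` otherwise. -/
theorem weight_dot_sigma (n : ℕ) (hn : 1 ≤ n) (p q : ℕ → ℕ)
    (hp0 : p 0 = 0) (hq0 : q 0 = 1)
    (hpn : p (n + 1) = 1) (hqn : q (n + 1) = 0)
    (hfarey : ∀ i ≤ n, p (i + 1) * q i = p i * q (i + 1) + 1)
    (j₁ j₂ : ℕ → ℕ)
    (hj₁ : ∀ i, 1 ≤ i → i ≤ n → j₁ i ≤ n + 1)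
    (hj₂ : ∀ i, 1 ≤ i → i ≤ n → j₂ i ≤ n + 1)
    (hparent : ∀ i, 1 ≤ i → i ≤ n →
      p (j₁ i) + p (j₂ i) = p i ∧ q (j₁ i) + q (j₂ i) = q i ∧
        p i * q (j₁ i) = p (j₁ i) * q i + 1)
    (w : ℕ → ℕ → ℤ)
    (hw0 : w 0 = 0) (hwtop : w (n + 1) = 0)
    (hw : ∀ i, 1 ≤ i → i ≤ n → w i = w (j₁ i) + w (j₂ i) + Pi.single i 1)
    (s : ℕ → ℕ → ℤ)
    (hs : ∀ j t, 1 ≤ t → t ≤ n →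
      s j t = if j = t then -1 else if j = j₁ t ∨ j = j₂ t then 1 else 0) :
    ∀ i j, 1 ≤ i → i ≤ n → j ≤ n + 1 →
      (∑ t ∈ Finset.Icc 1 n, w i t * s j t) =
        if j = i then -1
        else if j = 0 then (q i : ℤ)
        else if j = n + 1 then (p i : ℤ)
        else 0 := by
  have hqpos : ∀ i, i ≤ n → 1 ≤ q i := by
    intro i hi
    rcases Nat.eq_zero_or_pos (q i) with h | h
    · have hf := hfarey i hi
      rw [h] at hf
      simp at hf
    · exact h
  have hppos : ∀ i, 1 ≤ i → i ≤ n + 1 → 1 ≤ p i := by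
    intro i hi1 hi2
    obtain ⟨k, rfl⟩ : ∃ k, i = k + 1 := ⟨i - 1, by omega⟩
    rcases Nat.eq_zero_or_pos (p (k + 1)) with h | h
    · have hf := hfarey k (by omega)
      rw [h] at hf
      simp at hf
    · exact h
  have hm1 : ∀ k, k ≤ n + 1 → 1 ≤ p k + q k := by
    intro k hk
    rcases Nat.lt_or_ge k (n + 1) with h | h
    · have := hqpos k (by omega); omega
    · have hkk : k = n + 1 := by omega
      rw [hkk]; omega
  have key : ∀ N i, 1 ≤ i → i ≤ n → p i + q i ≤ N → ∀ j, j ≤ n + 1 →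
      (∑ t ∈ Finset.Icc 1 n, w i t * s j t) =
        if j = i then -1 else if j = 0 then (q i : ℤ)
        else if j = n + 1 then (p i : ℤ) else 0 := by
    intro N
    induction N with
    | zero => intro i h1 h2 hN; exact absurd (hqpos i h2) (by omega)
    | succ N ih =>
      intro i h1 h2 hN j hj
      obtain ⟨hpsum, hqsum, hdet⟩ := hparent i h1 h2
      have ha : j₁ i ≤ n + 1 := hj₁ i h1 h2
      have hb : j₂ i ≤ n + 1 := hj₂ i h1 h2
      have hne1 : j₁ i ≠ i := by
        intro h; rw [h] at hdet
        generalize p i * q i = A at hdet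
        omega
      have hne2 : j₂ i ≠ i := by
        intro h; rw [h] at hpsum hqsum
        have hq1 : q (j₁ i) = 0 := by omega
        have hp1 : p (j₁ i) = 0 := by omega
        rw [hp1, hq1] at hdet
        simp at hdet
      have hne12 : j₁ i ≠ j₂ i := by
        intro h; rw [← h] at hpsum hqsum
        have heq : p i * q (j₁ i) = p (j₁ i) * q i := by
          rw [← hpsum, ← hqsum]; ring
        omega
      have hma : 1 ≤ p (j₁ i) + q (j₁ i) := hm1 _ ha
      have hmb : 1 ≤ p (j₂ i) + q (j₂ i) := hm1 _ hb
      have hNa : p (j₁ i) + q (j₁ i) ≤ N := by omega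
      have hNb : p (j₂ i) + q (j₂ i) ≤ N := by omega
      have parval : ∀ k, k ≤ n + 1 → p k + q k ≤ N →
          (∑ t ∈ Finset.Icc 1 n, w k t * s j t) =
            if 1 ≤ k ∧ k ≤ n then
              (if j = k then -1 else if j = 0 then (q k : ℤ)
               else if j = n + 1 then (p k : ℤ) else 0)
            else 0 := by
        intro k hk hkN
        by_cases hk1 : 1 ≤ k ∧ k ≤ n
        · rw [ih k hk1.1 hk1.2 hkN j hj, if_pos hk1]
        · rw [if_neg hk1]
          have hk2 : k = 0 ∨ k = n + 1 := by omega
          rcases hk2 with rfl | rfl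
          · simp [hw0]
          · simp [hwtop]
      have hsplit : (∑ t ∈ Finset.Icc 1 n, w i t * s j t) =
          (∑ t ∈ Finset.Icc 1 n, w (j₁ i) t * s j t)
          + (∑ t ∈ Finset.Icc 1 n, w (j₂ i) t * s j t) + s j i := by
        rw [hw i h1 h2]
        simp only [Pi.add_apply, add_mul]
        rw [Finset.sum_add_distrib, Finset.sum_add_distrib]
        congr 1
        rw [Finset.sum_eq_single_of_mem i (Finset.mem_Icc.2 ⟨h1, h2⟩)]
        · simp
        · intro t _ hti; simp [Pi.single_eq_of_ne hti]
      rw [hsplit, parval _ ha hNa, parval _ hb hNb, hs j i h1 h2]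
      clear hsplit parval ih hs hw hfarey hparent hj₁ hj₂ hqpos hppos hm1
      clear hw0 hwtop hdet hN hNa hNb hma hmb
      have Gval : ∀ k, k ≤ n + 1 →
          (if 1 ≤ k ∧ k ≤ n then
              (if j = k then (-1 : ℤ) else if j = 0 then (q k : ℤ)
               else if j = n + 1 then (p k : ℤ) else 0)
            else 0) =
          (if j = k ∧ k ≠ 0 ∧ k ≠ n + 1 then (-1 : ℤ) else 0)
          + (if j = 0 then (q k : ℤ) - (if k = 0 then 1 else 0) else 0)
          + (if j = n + 1 then (p k : ℤ) - (if k = n + 1 then 1 else 0) else 0) := by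
        intro k hk
        have hk3 : k = 0 ∨ k = n + 1 ∨ (1 ≤ k ∧ k ≤ n) := by omega
        rcases hk3 with rfl | rfl | hmid
        · simp only [hq0, hp0]
          split_ifs <;> first | contradiction | omega
        · simp only [hqn, hpn]
          split_ifs <;> first | contradiction | omega
        · split_ifs <;> first | contradiction | omega
      rw [Gval _ ha, Gval _ hb]
      clear hp0 hq0 hpn hqn Gval
      have hjc : j = i ∨ j = 0 ∨ j = n + 1 ∨ (1 ≤ j ∧ j ≤ n ∧ j ≠ i) := by omega
      rcases hjc with rfl | rfl | rfl | ⟨hc1, hc2, hc3⟩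
      · simp only [(show j ≠ 0 by omega), (show j ≠ n + 1 by omega),
          Ne.symm hne1, Ne.symm hne2, if_false, false_and, if_true, eq_self_iff_true]
        first
          | omega
          | (split_ifs <;> first | contradiction | omega)
      · simp only [(show (0 : ℕ) ≠ i by omega), (show (0 : ℕ) ≠ n + 1 by omega),
          if_false, false_and, if_true, eq_self_iff_true]
        first
          | omega
          | (split_ifs <;> first | contradiction | omega)
      · simp only [(show n + 1 ≠ i by omega), (show n + 1 ≠ 0 by omega),
          if_false, false_and, if_true, eq_self_iff_true]
        first
          | omega
          | (split_ifs <;> first | contradiction | omega)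
      · simp only [hc3, (show j ≠ 0 by omega), (show j ≠ n + 1 by omega),
          if_false, false_and, if_true, eq_self_iff_true]
        first
          | omega
          | (split_ifs <;> first | contradiction | omega)
  intro i j h1 h2 hj
  exact key (p i + q i) i h1 h2 le_rfl j hj
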